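/- Under the stationary two-sequence k-mer model, for positions i ≠ j in {1,…,n−k+1}, ∑_{W ∈ [L]^k} (1/π^W)·Cov[ Z_i^W, Z_j^W ] = 0, where Z_m^W = X_{1,m}^W − X_{2,m}^W and X_{ℓ,m}^W is the indicator of the event that the word W occurs in S_ℓ starting at position m (i.e., S_ℓ(m+j−1) = w_j for all j = 1,…,k). -/

import Mathlib

open Finset

def kpos {n : ℕ} (hn : 0 < n) (m : ℕ) : Fin n := ⟨m % n, Nat.mod_lt m hn⟩

lemma kpos_val {n : ℕ} (hn : 0 < n) {m : ℕ} (hm : m < n) : (kpos hn m : Fin n).1 = m :=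
  Nat.mod_eq_of_lt hm

lemma kpos_ne {n : ℕ} (hn : 0 < n) {a b : ℕ} (ha : a < n) (hb : b < n) (hab : a ≠ b) :
    kpos hn a ≠ kpos hn b := by
  intro h
  apply hab
  have := congrArg Fin.val h
  rwa [kpos_val hn ha, kpos_val hn hb] at this

lemma sum_prod_eval {n : ℕ} {α : Type*} [Fintype α] [DecidableEq α] (f : Fin n → α → ℝ) :
    ∑ ω : Fin n → α, ∏ p, f p (ω p) = ∏ p, ∑ s, f p s :=
  (Fintype.prod_sum f).symm

lemma ind_forall_eq_prod_range {k : ℕ} (P : ℕ → Prop) [DecidablePred P] :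
    (if ∀ a : Fin k, P a.1 then (1:ℝ) else 0) = ∏ a ∈ range k, if P a then 1 else 0 := by
  by_cases h : ∀ a : Fin k, P a.1
  · rw [if_pos h]
    refine (Finset.prod_eq_one fun a ha => ?_).symm
    exact if_pos (h ⟨a, mem_range.mp ha⟩)
  · rw [if_neg h]
    push_neg at h
    obtain ⟨a, ha⟩ := h
    exact (Finset.prod_eq_zero (mem_range.mpr a.2)
      (if_neg ha : (if P a.1 then (1:ℝ) else 0) = 0)).symm

lemma update_sum_congr {n : ℕ} {α : Type*} [Fintype α] [Nonempty α] [DecidableEq α]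
    (q : Fin n) (H : (Fin n → α) → ℝ) (h h' : (Fin n → α) → α → ℝ)
    (hH : ∀ ω s, H (Function.update ω q s) = H ω)
    (hh : ∀ ω s t, h (Function.update ω q s) t = h ω t)
    (hh' : ∀ ω s t, h' (Function.update ω q s) t = h' ω t)
    (hsum : ∀ ω, ∑ s, h ω s = ∑ s, h' ω s) :
    ∑ ω : Fin n → α, H ω * h ω (ω q) = ∑ ω : Fin n → α, H ω * h' ω (ω q) := by
  have key : ∀ g : (Fin n → α) → α → ℝ, (∀ ω s t, g (Function.update ω q s) t = g ω t) →
      (Fintype.card α : ℝ) * ∑ ω : Fin n → α, H ω * g ω (ω q)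
        = ∑ ω : Fin n → α, H ω * ∑ s, g ω s := by
    intro g hg
    have hinv : Function.Involutive
        (fun p : α × (Fin n → α) => (p.2 q, Function.update p.2 q p.1)) := by
      intro p
      simp [Function.update_idem, Function.update_self, Function.update_eq_self]
    calc (Fintype.card α : ℝ) * ∑ ω : Fin n → α, H ω * g ω (ω q)
        = ∑ p : α × (Fin n → α), H p.2 * g p.2 (p.2 q) := by
          simp [Fintype.sum_prod_type, Finset.sum_const, card_univ, nsmul_eq_mul]
      _ = ∑ p : α × (Fin n → α), H p.2 * g p.2 p.1 := by
          refine (Fintype.sum_bijective _ hinv.bijective _ _ fun p => ?_).symm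
          show H p.2 * g p.2 p.1
            = H (Function.update p.2 q p.1) * g (Function.update p.2 q p.1)
                ((Function.update p.2 q p.1) q)
          rw [hH, Function.update_self, hg]
      _ = ∑ ω : Fin n → α, H ω * ∑ s, g ω s := by
          rw [Fintype.sum_prod_type, Finset.sum_comm]
          exact Finset.sum_congr rfl fun ω _ => by simp [Finset.mul_sum]
  have h1 := key h hh
  have h2 := key h' hh'
  have h3 : ∑ ω : Fin n → α, H ω * ∑ s, h ω s = ∑ ω : Fin n → α, H ω * ∑ s, h' ω s :=
    Finset.sum_congr rfl fun ω _ => by rw [hsum]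
  have hc : (Fintype.card α : ℝ) ≠ 0 := by
    exact_mod_cast Fintype.card_pos.ne'
  exact mul_left_cancel₀ hc (by rw [h1, h3, ← h2])

section Model

variable {L n : ℕ} (M : Matrix (Fin L) (Fin L) ℝ) (π : Fin L → ℝ)

lemma base_sum (hM1 : ∀ w, ∑ u, M w u = 1) (hπ1 : ∑ w, π w = 1) :
    ∑ s : Fin L × Fin L, π s.1 * M s.1 s.2 = 1 := by
  rw [Fintype.sum_prod_type]
  have : ∀ u : Fin L, ∑ v, π u * M u v = π u := by
    intro u; rw [← Finset.mul_sum, hM1, mul_one]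
  simp [this, hπ1]

lemma pick_fst_sum (hM1 : ∀ w, ∑ u, M w u = 1) (c : Fin L) :
    ∑ s : Fin L × Fin L, π s.1 * M s.1 s.2 * (if c = s.1 then 1 else 0) = π c := by
  rw [Fintype.sum_prod_type]
  have : ∀ u : Fin L, ∑ v, π u * M u v * (if c = u then 1 else 0)
      = if u = c then π u else 0 := by
    intro u
    by_cases h : u = c
    · subst h; simp [← Finset.mul_sum, hM1]
    · simp [h, Ne.symm h]
  simp only [this]
  simp [Finset.sum_ite_eq']

lemma pick_snd_sum (hstat : ∀ u, ∑ w, π w * M w u = π u) (c : Fin L) :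
    ∑ s : Fin L × Fin L, π s.1 * M s.1 s.2 * (if c = s.2 then 1 else 0) = π c := by
  rw [Fintype.sum_prod_type]
  have : ∀ u : Fin L, ∑ v, π u * M u v * (if c = v then 1 else 0) = π u * M u c := by
    intro u
    simp [mul_ite, eq_comm (a := c), Finset.sum_ite_eq']
  rw [Finset.sum_congr rfl fun u _ => this u]
  exact hstat c


lemma sum_base_one {n : ℕ} (hM1 : ∀ w, ∑ u, M w u = 1) (hπ1 : ∑ w, π w = 1) :
    ∑ ω : Fin n → Fin L × Fin L, ∏ p, π (ω p).1 * M (ω p).1 (ω p).2 = 1 := by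
  have h := sum_prod_eval (n := n) (fun _ (s : Fin L × Fin L) => π s.1 * M s.1 s.2)
  beta_reduce at h
  rw [h]
  rw [Finset.prod_congr rfl fun p _ => base_sum M π hM1 hπ1]
  simp

lemma nonempty_of_pi1 (hπ1 : ∑ w, π w = 1) : 0 < L := by
  by_contra h
  have : (Finset.univ : Finset (Fin L)) = ∅ :=
    Finset.univ_eq_empty_iff.mpr ⟨fun x => absurd x.2 (by omega)⟩
  rw [this] at hπ1
  simp at hπ1

lemma keyE {n : ℕ} (hn : 0 < n)
    (hM1 : ∀ w, ∑ u, M w u = 1) (hπ1 : ∑ w, π w = 1)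
    (pick : Fin L × Fin L → Fin L)
    (hpick : ∀ c, ∑ s : Fin L × Fin L, π s.1 * M s.1 s.2 * (if c = pick s then 1 else 0) = π c)
    (m : ℕ) (W' : ℕ → Fin L) :
    ∀ k', m + k' ≤ n →
      ∑ ω : Fin n → Fin L × Fin L,
        (∏ p, π (ω p).1 * M (ω p).1 (ω p).2) *
          ∏ a ∈ range k', (if W' a = pick (ω (kpos hn (m + a))) then (1:ℝ) else 0)
      = ∏ a ∈ range k', π (W' a) := by
  have hL : 0 < L := nonempty_of_pi1 π hπ1
  haveI : Nonempty (Fin L × Fin L) := ⟨(⟨0, hL⟩, ⟨0, hL⟩)⟩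
  intro k'
  induction k' with
  | zero =>
    intro _
    simp only [range_zero, prod_empty, mul_one]
    exact sum_base_one M π hM1 hπ1
  | succ k' ih =>
    intro hk1
    have hqn : m + k' < n := by omega
    set q : Fin n := kpos hn (m + k') with hq
    set H : (Fin n → Fin L × Fin L) → ℝ := fun ω =>
      (∏ p ∈ univ.erase q, π (ω p).1 * M (ω p).1 (ω p).2) *
        ∏ a ∈ range k', (if W' a = pick (ω (kpos hn (m + a))) then (1:ℝ) else 0) with hH
    have step : ∑ ω : Fin n → Fin L × Fin L,
        (∏ p, π (ω p).1 * M (ω p).1 (ω p).2) *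
          ∏ a ∈ range (k' + 1), (if W' a = pick (ω (kpos hn (m + a))) then (1:ℝ) else 0)
        = ∑ ω : Fin n → Fin L × Fin L,
            H ω * ((fun s => π s.1 * M s.1 s.2 * (if W' k' = pick s then (1:ℝ) else 0)) (ω q)) := by
      refine Finset.sum_congr rfl fun ω _ => ?_
      rw [hH]
      rw [← Finset.mul_prod_erase univ (fun p => π (ω p).1 * M (ω p).1 (ω p).2) (mem_univ q),
        prod_range_succ]
      ring
    have hHinv : ∀ ω s, H (Function.update ω q s) = H ω := by
      intro ω s
      rw [hH]
      dsimp only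
      congr 1
      · refine Finset.prod_congr rfl fun p hp => ?_
        rw [Function.update_of_ne (Finset.ne_of_mem_erase hp)]
      · refine Finset.prod_congr rfl fun a ha => ?_
        rw [Function.update_of_ne
          (kpos_ne hn (by have := mem_range.mp ha; omega) hqn
            (by have := mem_range.mp ha; omega))]
    have hmain := update_sum_congr q H
      (fun _ s => π s.1 * M s.1 s.2 * (if W' k' = pick s then (1:ℝ) else 0))
      (fun _ s => (π s.1 * M s.1 s.2) * π (W' k'))
      hHinv (fun _ _ _ => rfl) (fun _ _ _ => rfl)
      (by
        intro ω
        rw [hpick (W' k'), ← Finset.sum_mul, base_sum M π hM1 hπ1, one_mul])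
    rw [step, hmain]
    have step2 : ∑ ω : Fin n → Fin L × Fin L,
        H ω * ((fun _ s => (π s.1 * M s.1 s.2) * π (W' k')) ω (ω q))
        = (∑ ω : Fin n → Fin L × Fin L,
            (∏ p, π (ω p).1 * M (ω p).1 (ω p).2) *
              ∏ a ∈ range k', (if W' a = pick (ω (kpos hn (m + a))) then (1:ℝ) else 0))
          * π (W' k') := by
      rw [Finset.sum_mul]
      refine Finset.sum_congr rfl fun ω _ => ?_
      rw [hH]
      dsimp only
      rw [← Finset.mul_prod_erase univ (fun p => π (ω p).1 * M (ω p).1 (ω p).2) (mem_univ q)]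
      ring
    rw [step2, ih (by omega), prod_range_succ]

lemma keyC {n : ℕ} (hn : 0 < n)
    (hM1 : ∀ w, ∑ u, M w u = 1) (hπ1 : ∑ w, π w = 1) (hπ0 : ∀ w, 0 < π w)
    (pA pB : Fin L × Fin L → Fin L)
    (hpB : ∀ c, ∑ s : Fin L × Fin L, π s.1 * M s.1 s.2 * (if c = pB s then 1 else 0) = π c)
    (i j : ℕ) (hij : i < j) :
    ∀ k', j + k' ≤ n →
      ∑ ω : Fin n → Fin L × Fin L,
        (∏ p, π (ω p).1 * M (ω p).1 (ω p).2) *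
          ∏ a ∈ range k',
            ((if pA (ω (kpos hn (i + a))) = pB (ω (kpos hn (j + a))) then (1:ℝ) else 0)
              / π (pA (ω (kpos hn (i + a))))) = 1 := by
  have hL : 0 < L := nonempty_of_pi1 π hπ1
  haveI : Nonempty (Fin L × Fin L) := ⟨(⟨0, hL⟩, ⟨0, hL⟩)⟩
  intro k'
  induction k' with
  | zero =>
    intro _
    simp only [range_zero, prod_empty, mul_one]
    exact sum_base_one M π hM1 hπ1
  | succ k' ih =>
    intro hk1
    have hqn : j + k' < n := by omega
    have hrn : i + k' < n := by omega
    set q : Fin n := kpos hn (j + k') with hq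
    set r : Fin n := kpos hn (i + k') with hr
    have hrq : r ≠ q := kpos_ne hn hrn hqn (by omega)
    set H : (Fin n → Fin L × Fin L) → ℝ := fun ω =>
      (∏ p ∈ univ.erase q, π (ω p).1 * M (ω p).1 (ω p).2) *
        ∏ a ∈ range k',
          ((if pA (ω (kpos hn (i + a))) = pB (ω (kpos hn (j + a))) then (1:ℝ) else 0)
            / π (pA (ω (kpos hn (i + a))))) with hH
    have step : ∑ ω : Fin n → Fin L × Fin L,
        (∏ p, π (ω p).1 * M (ω p).1 (ω p).2) *
          ∏ a ∈ range (k' + 1),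
            ((if pA (ω (kpos hn (i + a))) = pB (ω (kpos hn (j + a))) then (1:ℝ) else 0)
              / π (pA (ω (kpos hn (i + a)))))
        = ∑ ω : Fin n → Fin L × Fin L,
            H ω * ((fun ω' (s : Fin L × Fin L) => π s.1 * M s.1 s.2 *
              ((if pA (ω' r) = pB s then (1:ℝ) else 0) / π (pA (ω' r)))) ω (ω q)) := by
      refine Finset.sum_congr rfl fun ω _ => ?_
      rw [hH]
      dsimp only
      rw [← Finset.mul_prod_erase univ (fun p => π (ω p).1 * M (ω p).1 (ω p).2) (mem_univ q),
        prod_range_succ]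
      ring
    have hHinv : ∀ ω s, H (Function.update ω q s) = H ω := by
      intro ω s
      rw [hH]
      dsimp only
      congr 1
      · refine Finset.prod_congr rfl fun p hp => ?_
        rw [Function.update_of_ne (Finset.ne_of_mem_erase hp)]
      · refine Finset.prod_congr rfl fun a ha => ?_
        have ha' := mem_range.mp ha
        rw [Function.update_of_ne (kpos_ne hn (by omega) hqn (by omega)),
          Function.update_of_ne (kpos_ne hn (by omega) hqn (by omega))]
    have hmain := update_sum_congr q H
      (fun ω' (s : Fin L × Fin L) => π s.1 * M s.1 s.2 *
        ((if pA (ω' r) = pB s then (1:ℝ) else 0) / π (pA (ω' r))))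
      (fun _ s => π s.1 * M s.1 s.2)
      hHinv
      (by
        intro ω s t
        beta_reduce
        rw [Function.update_of_ne hrq])
      (fun _ _ _ => rfl)
      (by
        intro ω
        beta_reduce
        have : ∀ s : Fin L × Fin L, π s.1 * M s.1 s.2 *
            ((if pA (ω r) = pB s then (1:ℝ) else 0) / π (pA (ω r)))
            = (π s.1 * M s.1 s.2 * (if pA (ω r) = pB s then (1:ℝ) else 0)) / π (pA (ω r)) := by
          intro s; ring
        rw [Finset.sum_congr rfl fun s _ => this s, ← Finset.sum_div, hpB (pA (ω r)),
          div_self (hπ0 (pA (ω r))).ne', base_sum M π hM1 hπ1])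
    rw [step, hmain]
    have step2 : ∑ ω : Fin n → Fin L × Fin L,
        H ω * ((fun (_ : Fin n → Fin L × Fin L) (s : Fin L × Fin L) =>
          π s.1 * M s.1 s.2) ω (ω q))
        = ∑ ω : Fin n → Fin L × Fin L,
            (∏ p, π (ω p).1 * M (ω p).1 (ω p).2) *
              ∏ a ∈ range k',
                ((if pA (ω (kpos hn (i + a))) = pB (ω (kpos hn (j + a))) then (1:ℝ) else 0)
                  / π (pA (ω (kpos hn (i + a))))) := by
      refine Finset.sum_congr rfl fun ω _ => ?_
      rw [hH]
      dsimp only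
      rw [← Finset.mul_prod_erase univ (fun p => π (ω p).1 * M (ω p).1 (ω p).2) (mem_univ q)]
      ring
    rw [step2, ih (by omega)]

def Xind {L n : ℕ} (k : ℕ) (hn : 0 < n) (pick : Fin L × Fin L → Fin L) (m : ℕ)
    (W : Fin k → Fin L) (ω : Fin n → Fin L × Fin L) : ℝ :=
  if ∀ a : Fin k, pick (ω (kpos hn (m + a.1))) = W a then 1 else 0

lemma EXind {k n : ℕ} (hn : 0 < n) (hk : 0 < k)
    (hM1 : ∀ w, ∑ u, M w u = 1) (hπ1 : ∑ w, π w = 1)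
    (pick : Fin L × Fin L → Fin L)
    (hpick : ∀ c, ∑ s : Fin L × Fin L, π s.1 * M s.1 s.2 * (if c = pick s then 1 else 0) = π c)
    (m : ℕ) (hm : m + k ≤ n) (W : Fin k → Fin L) :
    ∑ ω : Fin n → Fin L × Fin L,
      (∏ p, π (ω p).1 * M (ω p).1 (ω p).2) * Xind k hn pick m W ω = ∏ a, π (W a) := by
  set W' : ℕ → Fin L := fun a => if h : a < k then W ⟨a, h⟩ else W ⟨0, hk⟩ with hW'def
  have hW' : ∀ a : Fin k, W' a.1 = W a := by
    intro a
    rw [hW'def]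
    simp [a.2]
  have hconv : ∀ ω : Fin n → Fin L × Fin L, Xind k hn pick m W ω
      = ∏ a ∈ range k, if W' a = pick (ω (kpos hn (m + a))) then (1:ℝ) else 0 := by
    intro ω
    rw [← ind_forall_eq_prod_range (fun a => W' a = pick (ω (kpos hn (m + a))))]
    unfold Xind
    refine if_congr ?_ rfl rfl
    exact forall_congr' fun a => by rw [hW' a]; exact eq_comm
  rw [Finset.sum_congr rfl fun ω _ => by rw [hconv ω]]
  rw [keyE M π hn hM1 hπ1 pick hpick m W' k hm]
  rw [← Fin.prod_univ_eq_prod_range (fun a => π (W' a)) k]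
  exact Finset.prod_congr rfl fun a _ => by rw [hW' a]

lemma TX {k n : ℕ} (hn : 0 < n) (hk : 0 < k)
    (hM1 : ∀ w, ∑ u, M w u = 1) (hπ1 : ∑ w, π w = 1) (hπ0 : ∀ w, 0 < π w)
    (pA pB : Fin L × Fin L → Fin L)
    (hpB : ∀ c, ∑ s : Fin L × Fin L, π s.1 * M s.1 s.2 * (if c = pB s then 1 else 0) = π c)
    (i j : ℕ) (hij : i < j) (hi : i + k ≤ n) (hj : j + k ≤ n) :
    ∑ W : Fin k → Fin L, (1 / ∏ j', π (W j')) *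
      ∑ ω : Fin n → Fin L × Fin L,
        (∏ p, π (ω p).1 * M (ω p).1 (ω p).2) *
          (Xind k hn pA i W ω * Xind k hn pB j W ω) = 1 := by
  have hXeq : ∀ (pick : Fin L × Fin L → Fin L) (m : ℕ) (W : Fin k → Fin L)
      (ω : Fin n → Fin L × Fin L), Xind k hn pick m W ω
        = if W = (fun a : Fin k => pick (ω (kpos hn (m + a.1)))) then (1:ℝ) else 0 := by
    intro pick m W ω
    unfold Xind
    refine if_congr ?_ rfl rfl
    rw [funext_iff]
    exact forall_congr' fun a => eq_comm
  have inner : ∀ ω : Fin n → Fin L × Fin L,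
      ∑ W : Fin k → Fin L, (1 / ∏ j', π (W j')) *
        ((∏ p, π (ω p).1 * M (ω p).1 (ω p).2) *
          (Xind k hn pA i W ω * Xind k hn pB j W ω))
      = (∏ p, π (ω p).1 * M (ω p).1 (ω p).2) *
          ∏ a ∈ range k,
            ((if pA (ω (kpos hn (i + a))) = pB (ω (kpos hn (j + a))) then (1:ℝ) else 0)
              / π (pA (ω (kpos hn (i + a))))) := by
    intro ω
    set A : Fin k → Fin L := fun a => pA (ω (kpos hn (i + a.1))) with hA
    set B : Fin k → Fin L := fun a => pB (ω (kpos hn (j + a.1))) with hB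
    have hterm : ∀ W : Fin k → Fin L, (1 / ∏ j', π (W j')) *
        ((∏ p, π (ω p).1 * M (ω p).1 (ω p).2) *
          (Xind k hn pA i W ω * Xind k hn pB j W ω))
        = (∏ p, π (ω p).1 * M (ω p).1 (ω p).2) *
          ((1 / ∏ j', π (W j')) *
            ((if W = A then (1:ℝ) else 0) * (if W = B then (1:ℝ) else 0))) := by
      intro W
      rw [hXeq pA i W ω, hXeq pB j W ω, ← hA, ← hB]
      ring
    rw [Finset.sum_congr rfl fun W _ => hterm W, ← Finset.mul_sum]
    congr 1
    rw [Finset.sum_eq_single_of_mem A (mem_univ A)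
      (fun W _ hW => by rw [if_neg hW]; ring)]
    rw [if_pos rfl, one_mul]
    have h1 : (if A = B then (1:ℝ) else 0)
        = ∏ a ∈ range k,
            (if pA (ω (kpos hn (i + a))) = pB (ω (kpos hn (j + a))) then (1:ℝ) else 0) := by
      rw [← ind_forall_eq_prod_range
        (fun a => pA (ω (kpos hn (i + a))) = pB (ω (kpos hn (j + a))))]
      refine if_congr ?_ rfl rfl
      rw [funext_iff]
    have h2 : (1 / ∏ j', π (A j'))
        = ∏ a ∈ range k, (1 / π (pA (ω (kpos hn (i + a))))) := by
      rw [← Fin.prod_univ_eq_prod_range (fun a => 1 / π (pA (ω (kpos hn (i + a))))) k]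
      simp [one_div, Finset.prod_inv_distrib]
      rfl
    rw [h1, h2, ← Finset.prod_mul_distrib]
    exact Finset.prod_congr rfl fun a _ => by ring
  rw [Finset.sum_congr rfl fun W _ => Finset.mul_sum _ _ _, Finset.sum_comm,
    Finset.sum_congr rfl fun ω _ => inner ω]
  exact keyC M π hn hM1 hπ1 hπ0 pA pB hpB i j hij k hj

theorem kmer_weighted_covariance_sum_eq_zero
    (L k n : ℕ) (hL : 1 ≤ L) (hk : 1 ≤ k) (hkn : k ≤ n)
    (M : Matrix (Fin L) (Fin L) ℝ)
    (hM0 : ∀ w u, 0 ≤ M w u)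
    (hM1 : ∀ w, ∑ u, M w u = 1)
    (π : Fin L → ℝ)
    (hπ0 : ∀ w, 0 < π w)
    (hπ1 : ∑ w, π w = 1)
    (hstat : ∀ u, ∑ w, π w * M w u = π u)
    (prob : (Fin n → Fin L × Fin L) → ℝ)
    (hprob : ∀ ω, prob ω = ∏ i, π (ω i).1 * M (ω i).1 (ω i).2)
    (E : ((Fin n → Fin L × Fin L) → ℝ) → ℝ)
    (hE : ∀ f, E f = ∑ ω, prob ω * f ω)
    (Z : Fin (n - k + 1) → (Fin k → Fin L) → (Fin n → Fin L × Fin L) → ℝ)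
    (hZ : ∀ m W ω, Z m W ω =
      (if ∀ j : Fin k, (ω ⟨m.1 + j.1, by have := m.2; have := j.2; omega⟩).1 = W j
        then 1 else 0)
      - (if ∀ j : Fin k, (ω ⟨m.1 + j.1, by have := m.2; have := j.2; omega⟩).2 = W j
        then 1 else 0))
    (Cov : ((Fin n → Fin L × Fin L) → ℝ) → ((Fin n → Fin L × Fin L) → ℝ) → ℝ)
    (hCov : ∀ f g, Cov f g = E (fun ω => f ω * g ω) - E f * E g)
    (i j : Fin (n - k + 1)) (hij : i ≠ j) :
    ∑ W : Fin k → Fin L, (1 / ∏ j', π (W j')) * Cov (Z i W) (Z j W) = 0 := by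
  have hn : 0 < n := lt_of_lt_of_le hk hkn
  have hfst := pick_fst_sum M π hM1
  have hsnd := pick_snd_sum M π hstat
  -- rewrite Z in terms of Xind
  have hXZ : ∀ (m : Fin (n - k + 1)) (W : Fin k → Fin L) (ω : Fin n → Fin L × Fin L),
      Z m W ω = Xind k hn Prod.fst m.1 W ω - Xind k hn Prod.snd m.1 W ω := by
    intro m W ω
    have hm := m.2
    rw [hZ]
    have hposeq : ∀ a : Fin k,
        (⟨m.1 + a.1, by have := a.2; omega⟩ : Fin n) = kpos hn (m.1 + a.1) := by
      intro a
      exact Fin.ext (kpos_val hn (by have := a.2; omega)).symm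
    congr 1
    · unfold Xind
      refine if_congr ?_ rfl rfl
      exact forall_congr' fun a => by rw [hposeq a]
    · unfold Xind
      refine if_congr ?_ rfl rfl
      exact forall_congr' fun a => by rw [hposeq a]
  -- expectation of the single indicators
  have hEX : ∀ (pick : Fin L × Fin L → Fin L),
      (∀ c, ∑ s : Fin L × Fin L, π s.1 * M s.1 s.2 * (if c = pick s then 1 else 0) = π c) →
      ∀ (m : Fin (n - k + 1)) (W : Fin k → Fin L),
        E (Xind k hn pick m.1 W) = ∏ a, π (W a) := by
    intro pick hpick m W
    have hm : m.1 + k ≤ n := by have := m.2; omega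
    rw [hE]
    rw [Finset.sum_congr rfl fun ω _ => by rw [hprob ω]]
    exact EXind M π hn hk hM1 hπ1 pick hpick m.1 hm W
  have hEZ : ∀ (m : Fin (n - k + 1)) (W : Fin k → Fin L), E (Z m W) = 0 := by
    intro m W
    have : E (Z m W) = E (fun ω => Xind k hn Prod.fst m.1 W ω - Xind k hn Prod.snd m.1 W ω) :=
      congrArg E (funext fun ω => hXZ m W ω)
    rw [this, hE]
    rw [Finset.sum_congr rfl fun ω _ => mul_sub (prob ω) _ _, Finset.sum_sub_distrib]
    have e1 : ∑ ω, prob ω * Xind k hn Prod.fst m.1 W ω = E (Xind k hn Prod.fst m.1 W) :=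
      (hE _).symm
    have e2 : ∑ ω, prob ω * Xind k hn Prod.snd m.1 W ω = E (Xind k hn Prod.snd m.1 W) :=
      (hE _).symm
    rw [e1, e2, hEX Prod.fst hfst m W, hEX Prod.snd hsnd m W, sub_self]
  -- the main case
  have main : ∀ p q : Fin (n - k + 1), p.1 < q.1 →
      ∑ W : Fin k → Fin L, (1 / ∏ j', π (W j')) * Cov (Z p W) (Z q W) = 0 := by
    intro p q hpq
    have hp : p.1 + k ≤ n := by have := p.2; omega
    have hq : q.1 + k ≤ n := by have := q.2; omega
    have hT : ∀ (pA pB : Fin L × Fin L → Fin L),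
        (∀ c, ∑ s : Fin L × Fin L, π s.1 * M s.1 s.2 * (if c = pB s then 1 else 0) = π c) →
        ∑ W : Fin k → Fin L, (1 / ∏ j', π (W j')) *
          E (fun ω => Xind k hn pA p.1 W ω * Xind k hn pB q.1 W ω) = 1 := by
      intro pA pB hpB
      have conv : ∀ W : Fin k → Fin L,
          E (fun ω => Xind k hn pA p.1 W ω * Xind k hn pB q.1 W ω)
          = ∑ ω : Fin n → Fin L × Fin L,
              (∏ p', π (ω p').1 * M (ω p').1 (ω p').2) *
                (Xind k hn pA p.1 W ω * Xind k hn pB q.1 W ω) := by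
        intro W
        rw [hE]
        exact Finset.sum_congr rfl fun ω _ => by rw [hprob ω]
      rw [Finset.sum_congr rfl fun W _ => by rw [conv W]]
      exact TX M π hn hk hM1 hπ1 hπ0 pA pB hpB p.1 q.1 hpq hp hq
    have hcov : ∀ W : Fin k → Fin L, Cov (Z p W) (Z q W)
        = E (fun ω => Xind k hn Prod.fst p.1 W ω * Xind k hn Prod.fst q.1 W ω)
        - E (fun ω => Xind k hn Prod.fst p.1 W ω * Xind k hn Prod.snd q.1 W ω)
        - E (fun ω => Xind k hn Prod.snd p.1 W ω * Xind k hn Prod.fst q.1 W ω)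
        + E (fun ω => Xind k hn Prod.snd p.1 W ω * Xind k hn Prod.snd q.1 W ω) := by
      intro W
      rw [hCov, hEZ p W, zero_mul, sub_zero]
      rw [hE, hE, hE, hE, hE]
      rw [← Finset.sum_sub_distrib, ← Finset.sum_sub_distrib, ← Finset.sum_add_distrib]
      refine Finset.sum_congr rfl fun ω _ => ?_
      rw [hXZ p W ω, hXZ q W ω]
      ring
    rw [Finset.sum_congr rfl fun W _ => by rw [hcov W]]
    have expand : ∀ W : Fin k → Fin L, (1 / ∏ j', π (W j')) *
        (E (fun ω => Xind k hn Prod.fst p.1 W ω * Xind k hn Prod.fst q.1 W ω)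
        - E (fun ω => Xind k hn Prod.fst p.1 W ω * Xind k hn Prod.snd q.1 W ω)
        - E (fun ω => Xind k hn Prod.snd p.1 W ω * Xind k hn Prod.fst q.1 W ω)
        + E (fun ω => Xind k hn Prod.snd p.1 W ω * Xind k hn Prod.snd q.1 W ω))
        = (1 / ∏ j', π (W j')) *
            E (fun ω => Xind k hn Prod.fst p.1 W ω * Xind k hn Prod.fst q.1 W ω)
        - (1 / ∏ j', π (W j')) *
            E (fun ω => Xind k hn Prod.fst p.1 W ω * Xind k hn Prod.snd q.1 W ω)
        - (1 / ∏ j', π (W j')) *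
            E (fun ω => Xind k hn Prod.snd p.1 W ω * Xind k hn Prod.fst q.1 W ω)
        + (1 / ∏ j', π (W j')) *
            E (fun ω => Xind k hn Prod.snd p.1 W ω * Xind k hn Prod.snd q.1 W ω) := by
      intro W; ring
    rw [Finset.sum_congr rfl fun W _ => expand W]
    rw [Finset.sum_add_distrib, Finset.sum_sub_distrib, Finset.sum_sub_distrib]
    rw [hT Prod.fst Prod.fst hfst, hT Prod.fst Prod.snd hsnd,
      hT Prod.snd Prod.fst hfst, hT Prod.snd Prod.snd hsnd]
    norm_num
  have hvne : i.1 ≠ j.1 := fun h => hij (Fin.ext h)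
  rcases lt_or_gt_of_ne hvne with h | h
  · exact main i j h
  · have hsym : ∀ W : Fin k → Fin L, Cov (Z i W) (Z j W) = Cov (Z j W) (Z i W) := by
      intro W
      rw [hCov, hCov]
      have : (fun ω => Z i W ω * Z j W ω) = (fun ω => Z j W ω * Z i W ω) :=
        funext fun ω => mul_comm _ _
      rw [this, mul_comm (E (Z i W))]
    rw [Finset.sum_congr rfl fun W _ => by rw [hsym W]]
    exact main j i h
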